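/- arXiv:1304.7287 — 2 statements merged into one kernel-verified Lean document; each statement's English description precedes it below -/
import Mathlib

section
/- (Subduality) Let a be a non-degenerate arrow environment on ℤ (i.e., for each site n, the sequence a(n,·) ∈ {0,1}^ℕ contains infinitely many 0's and infinitely many 1's). Fix l ≥ 1, and for x ∈ ℕ define Z⁺_l(x) = U⁺_{a(l−1,·)} ∘ ⋯ ∘ U⁺_{a(0,·)}(x), the l-fold forward composition, and Z⁻_l(y) = U⁻_{a(0,·)} ∘ ⋯ ∘ U⁻_{a(l−1,·)}(y), the l-fold backward composition. If Z⁺_l(x) ≥ y, then Z⁻_l(y) ≤ x. -/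
open Filter Set

/-- The number of `true`s (1's) appearing strictly before the `x`-th `false` (0)
in the binary sequence `b`; `Uplus b 0 = 0`. -/
noncomputable def Uplus (b : ℕ → Bool) (x : ℕ) : ℕ :=
  if x = 0 then 0
  else sInf {j : ℕ | ((Finset.range j).filter (fun i => b i = false)).card = x} - x

/-- The number of `false`s (0's) appearing strictly before the `x`-th `true` (1). -/
noncomputable def Uminus (b : ℕ → Bool) (x : ℕ) : ℕ :=
  Uplus (fun i => !(b i)) x

/-- A binary sequence is non-degenerate if it has infinitely many 0's and
infinitely many 1's. -/
def NonDeg (b : ℕ → Bool) : Prop :=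
  {i | b i = false}.Infinite ∧ {i | b i = true}.Infinite

/-- An arrow environment is non-degenerate if every column is non-degenerate. -/
def NonDegEnv (a : ℤ → ℕ → Bool) : Prop := ∀ x : ℤ, NonDeg (a x)

/-- The history (most recent position first) of the walk driven by the arrow
environment `a`, started at `0`: at its `k`-th visit (`k` counted from `0`)
to site `x` the walk moves right if `a x k = true` and left otherwise. -/
def walkHist (a : ℤ → ℕ → Bool) : ℕ → List ℤ
  | 0 => [0]
  | t + 1 =>
    let h := walkHist a t
    let x := h.headI
    let k := h.countP (fun y => decide (y = x)) - 1
    (x + (if a x k then 1 else -1)) :: h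

/-- The position at time `t` of the walk driven by `a`, started at `0`. -/
def walk (a : ℤ → ℕ → Bool) (t : ℕ) : ℤ := (walkHist a t).headI

/-- `Zplus a n y`: the forward process `Z⁺` with initial value `y`. -/
noncomputable def Zplus (a : ℤ → ℕ → Bool) : ℕ → ℕ → ℕ
  | 0, y => y
  | n + 1, y => Uplus (a (n : ℤ)) (Zplus a n y)

/-- `Zminus a n y`: the backward process `Z⁻` with initial value `y`. -/
noncomputable def Zminus (a : ℤ → ℕ → Bool) : ℕ → ℕ → ℕ
  | 0, y => y
  | n + 1, y => Uminus (a (-(n : ℤ))) (Zminus a n y)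

/-- `ZminusBack a l y = U⁻_{a 0} ∘ ⋯ ∘ U⁻_{a (l-1)} (y)`. -/
noncomputable def ZminusBack (a : ℤ → ℕ → Bool) (l y : ℕ) : ℕ :=
  (List.range l).foldr (fun i z => Uminus (a (i : ℤ)) z) y


section Aux

lemma sInf_count_eq (p : ℕ → Prop) [DecidablePred p] (hp : (setOf p).Infinite)
    (x : ℕ) (hx : 1 ≤ x) :
    sInf {j : ℕ | Nat.count p j = x} = Nat.nth p (x - 1) + 1 := by
  apply le_antisymm
  · apply Nat.sInf_le
    show Nat.count p (Nat.nth p (x-1) + 1) = x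
    rw [Nat.count_nth_succ_of_infinite hp]
    omega
  · have hne : {j : ℕ | Nat.count p j = x}.Nonempty :=
      ⟨Nat.nth p (x-1) + 1, by simp only [Set.mem_setOf_eq,
        Nat.count_nth_succ_of_infinite hp]; omega⟩
    have hj : Nat.count p (sInf {j : ℕ | Nat.count p j = x}) = x := Nat.sInf_mem hne
    have h1 : Nat.count p (Nat.nth p (x-1)) = x - 1 := Nat.count_nth_of_infinite hp _
    have : Nat.nth p (x-1) < sInf {j : ℕ | Nat.count p j = x} := by
      by_contra hc
      push_neg at hc
      have := Nat.count_monotone p hc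
      omega
    omega

lemma count_add_count (b : ℕ → Bool) (j : ℕ) :
    Nat.count (fun i => b i = false) j + Nat.count (fun i => b i = true) j = j := by
  rw [Nat.count_eq_card_filter_range, Nat.count_eq_card_filter_range]
  have h := Finset.card_filter_add_card_filter_not (s := Finset.range j)
    (p := fun i => b i = false)
  rw [Finset.card_range] at h
  have hcongr : (Finset.range j).filter (fun i => b i = true)
      = (Finset.range j).filter (fun i => ¬ b i = false) := by
    apply Finset.filter_congr; intro i _; simp
  rw [hcongr]
  exact h

lemma Uplus_eq (b : ℕ → Bool) (hb : {i | b i = false}.Infinite) (x : ℕ) (hx : 1 ≤ x) :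
    Uplus b x = Nat.nth (fun i => b i = false) (x - 1) + 1 - x := by
  rw [Uplus, if_neg (by omega)]
  congr 1
  have hs := sInf_count_eq (fun i => b i = false) hb x hx
  rw [← hs]
  congr 1
  ext j
  simp [Nat.count_eq_card_filter_range]

/-- The key one-step subduality: `y ≤ U⁺_b x → U⁻_b y ≤ x`. -/
lemma key_subdual (b : ℕ → Bool) (hb : NonDeg b) (x y : ℕ) (h : y ≤ Uplus b x) :
    Uminus b y ≤ x := by
  rcases Nat.eq_zero_or_pos y with hy | hy
  · subst hy
    simp [Uminus, Uplus]
  rcases Nat.eq_zero_or_pos x with hx | hx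
  · subst hx; simp [Uplus] at h; omega
  obtain ⟨hb0, hb1⟩ := hb
  set p : ℕ → Prop := fun i => b i = false with hp
  set q : ℕ → Prop := fun i => b i = true with hq
  have hq' : {i | (!b i) = false}.Infinite := by
    apply hb1.mono; intro i; simp [hq]
  rw [Uplus_eq b hb0 x hx] at h
  rw [Uminus, Uplus_eq _ hq' y hy]
  set j := Nat.nth p (x - 1) + 1 with hj
  have hcpj : Nat.count p j = x := by
    rw [hj, Nat.count_nth_succ_of_infinite hb0]; omega
  have hcqj : Nat.count q j = j - x := by
    have := count_add_count b j
    simp only [← hp, ← hq] at this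
    omega
  have hnthq : Nat.count q (Nat.nth q (y - 1)) = y - 1 := Nat.count_nth_of_infinite hb1 _
  have hjx : x ≤ j := by
    have h2 := Nat.count_le (p := p) (n := j)
    omega
  have hlt : Nat.nth q (y - 1) < j := by
    by_contra hc
    push_neg at hc
    have := Nat.count_monotone q hc
    omega
  set m := Nat.nth q (y - 1) with hm
  have hcq : Nat.count q (m + 1) = y := by
    rw [hm, Nat.count_nth_succ_of_infinite hb1]; omega
  have hcp : Nat.count p (m + 1) = m + 1 - y := by
    have := count_add_count b (m + 1)
    simp only [← hp, ← hq] at this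
    omega
  have hle : Nat.count p (m + 1) ≤ x := by
    rw [← hcpj]
    exact Nat.count_monotone p (by omega)
  have heq : (fun i => (!b i) = false) = q := by
    ext i; simp [hq]
  rw [heq]
  have hmy : y ≤ m + 1 := by
    have := Nat.count_le (p := q) (n := m + 1)
    omega
  omega

end Aux

/-- Subduality: if the `l`-fold forward composition starting from `x`
is at least `y`, then the `l`-fold backward composition starting from `y` is at most `x`. -/
theorem stmt_3 (a : ℤ → ℕ → Bool) (hnd : NonDegEnv a) (l : ℕ) (hl : 1 ≤ l)
    (x y : ℕ) (h : y ≤ Zplus a l x) :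
    ZminusBack a l y ≤ x := by
  clear hl
  induction l generalizing y with
  | zero => simpa [ZminusBack, Zplus] using h
  | succ n ih =>
    have hstep : ZminusBack a (n+1) y = ZminusBack a n (Uminus (a (n : ℤ)) y) := by
      simp [ZminusBack, List.range_succ]
    rw [hstep]
    exact ih _ (key_subdual (a (n : ℤ)) (hnd (n : ℤ)) _ _ h)
end

section
/- Let a be a non-degenerate arrow environment, X the walk on ℤ driven by a started at 0, T₋₁ its hitting time of −1, and W_n (for n ≥ 1) the number of right crossings of the edge {n−1,n} before time T₋₁, with W₀ = 1. Define Z⁺_0 = 1 and Z⁺_n = U⁺_{a(n−1,·)}(Z⁺_{n−1}). If T₋₁ = ∞, then Z⁺_n ≥ W_n for all n ≥ 0. -/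
open Filter Set

section WalkAux

variable (a : ℤ → ℕ → Bool)

lemma walk_zero : walk a 0 = 0 := rfl
lemma walkHist_succ (t : ℕ) : walkHist a (t+1) = walk a (t+1) :: walkHist a t := rfl
lemma countHist (t : ℕ) (x : ℤ) :
    (walkHist a t).countP (fun y => decide (y = x)) = Nat.count (fun s => walk a s = x) (t+1) := by
  induction t with
  | zero => simp [walkHist, Nat.count_one, walk_zero, List.countP_cons, walk]; congr
  | succ t ih =>
      rw [walkHist_succ, List.countP_cons, ih, Nat.count_succ (fun s => walk a s = x) (t+1)]
      simp
lemma walk_succ (t : ℕ) : walk a (t+1) = walk a t +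
    (if a (walk a t) (Nat.count (fun s => walk a s = walk a t) t) then 1 else -1) := by
  have h0 : walk a (t+1) = (walkHist a t).headI +
      (if a ((walkHist a t).headI)
        ((walkHist a t).countP (fun y => decide (y = (walkHist a t).headI)) - 1)
        then 1 else -1) := rfl
  have h1 : (walkHist a t).headI = walk a t := rfl
  rw [h0, h1, countHist a t (walk a t), Nat.count_succ (fun s => walk a s = walk a t) t]
  simp

lemma walk_step (t : ℕ) : walk a (t+1) = walk a t + 1 ∨ walk a (t+1) = walk a t - 1 := by
  rw [walk_succ]; split_ifs <;> [left; right] <;> ring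

/-- at the k-th visit to x, the arrow a x k decides the step -/
lemma walk_succ_of_eq {t : ℕ} {x : ℤ} (hx : walk a t = x) :
    walk a (t+1) = x + (if a x (Nat.count (fun s => walk a s = x) t) then 1 else -1) := by
  rw [walk_succ, hx]

variable (h : ∀ t, walk a t ≠ -1)
include h

lemma walk_nonneg (t : ℕ) : 0 ≤ walk a t := by
  induction t with
  | zero => rw [walk_zero]
  | succ t ih =>
      rcases walk_step a t with h1 | h1 <;> have := h (t+1) <;> omega

lemma descent {x : ℤ} (hnd : NonDegEnv a) (hx : {t | walk a t = x}.Infinite) :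
    {t | walk a t = x - 1}.Infinite := by
  classical
  set p : ℕ → Prop := fun t => walk a t = x with hp
  have himg : (fun k => Nat.nth p k + 1) '' {k | a x k = false} ⊆ {t | walk a t = x - 1} := by
    rintro _ ⟨k, hk, rfl⟩
    have h1 : p (Nat.nth p k) := Nat.nth_mem_of_infinite hx k
    have h2 : Nat.count p (Nat.nth p k) = k := Nat.count_nth_of_infinite hx k
    have := walk_succ_of_eq a h1
    rw [h2, hk] at this
    simpa [sub_eq_add_neg] using this
  refine Set.Infinite.mono himg (Set.Infinite.image ?_ (hnd x).1)
  intro i _ j _ hij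
  simp only at hij
  exact Nat.nth_injective hx (by omega : Nat.nth p i = Nat.nth p j)

lemma finite_visits (hnd : NonDegEnv a) (x : ℤ) : {t | walk a t = x}.Finite := by
  by_contra hx
  rw [← Set.Infinite] at hx
  have key : ∀ m : ℕ, {t | walk a t = x - m}.Infinite := by
    intro m
    induction m with
    | zero => simpa using hx
    | succ m ih =>
        have := descent a h hnd ih
        have he : x - (m+1 : ℕ) = x - m - 1 := by push_cast; ring
        rwa [he]
  obtain ⟨t, ht⟩ := (key (x.toNat + 1)).nonempty
  have := walk_nonneg a h t
  simp only [Set.mem_setOf_eq] at ht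
  omega

end WalkAux


section Aux

lemma site_count (p q : ℕ → Prop) [DecidablePred p] [DecidablePred q]
    (hf : (setOf p).Finite) :
    {t | p t ∧ q (Nat.count p t)}.ncard
      = ((Finset.range hf.toFinset.card).filter q).card := by
  classical
  have hinj : Set.InjOn (Nat.count p) {t | p t ∧ q (Nat.count p t)} := by
    intro s hs t ht hst
    exact Nat.count_injective hs.1 ht.1 hst
  have himg : Nat.count p '' {t | p t ∧ q (Nat.count p t)}
      = ↑((Finset.range hf.toFinset.card).filter q) := by
    ext k
    simp only [Set.mem_image, Finset.coe_filter, Finset.mem_range, Set.mem_setOf_eq]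
    constructor
    · rintro ⟨t, ⟨hpt, hqt⟩, rfl⟩
      exact ⟨Nat.count_lt_card hf hpt, hqt⟩
    · rintro ⟨hk, hq⟩
      refine ⟨Nat.nth p k, ⟨Nat.nth_mem_of_lt_card hf hk, ?_⟩,
        Nat.count_nth_of_lt_card_finite hf hk⟩
      rwa [Nat.count_nth_of_lt_card_finite hf hk]
  rw [← Set.ncard_image_of_injOn hinj, himg, Set.ncard_coe_finset]

/-- `Uplus b (k+1)` computed via `Nat.nth`. -/
lemma Uplus_succ (b : ℕ → Bool) (hb : {i | b i = false}.Infinite) (k : ℕ) :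
    Uplus b (k + 1) = Nat.nth (fun i => b i = false) k - k := by
  classical
  set q : ℕ → Prop := fun i => b i = false with hq
  have hqi : (setOf q).Infinite := hb
  have hcnt : ∀ j, ((Finset.range j).filter (fun i => b i = false)).card = Nat.count q j := by
    intro j; rw [Nat.count_eq_card_filter_range]
  have hmem : Nat.count q (Nat.nth q k + 1) = k + 1 := by
    rw [Nat.count_succ, Nat.count_nth_of_infinite hqi, if_pos (Nat.nth_mem_of_infinite hqi k)]
  have hSinf : sInf {j : ℕ | ((Finset.range j).filter (fun i => b i = false)).card = k + 1}
      = Nat.nth q k + 1 := by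
    refine le_antisymm (Nat.sInf_le ?_) (le_csInf ⟨Nat.nth q k + 1, ?_⟩ ?_)
    · simpa [hcnt] using hmem
    · simpa [hcnt] using hmem
    · intro j hj
      simp only [Set.mem_setOf_eq, hcnt] at hj
      by_contra hlt
      push_neg at hlt
      have : Nat.count q j ≤ Nat.count q (Nat.nth q k) := Nat.count_monotone q (by omega)
      rw [Nat.count_nth_of_infinite hqi] at this
      omega
  rw [Uplus, if_neg (by omega : k + 1 ≠ 0), hSinf]
  have := Nat.le_nth (p := q) (fun hf => absurd hf hqi) (n := k)
  omega

lemma Uplus_mono (b : ℕ → Bool) (hb : {i | b i = false}.Infinite) : Monotone (Uplus b) := by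
  have hg : Monotone (fun k => Nat.nth (fun i => b i = false) k - k) := by
    apply monotone_nat_of_le_succ
    intro k
    have h1 : Nat.nth (fun i => b i = false) k < Nat.nth (fun i => b i = false) (k+1) :=
      (Nat.nth_lt_nth hb).2 (Nat.lt_succ_self k)
    have h2 := Nat.le_nth (p := fun i => b i = false) (fun hf => absurd hf hb) (n := k)
    omega
  intro x y hxy
  match x, y with
  | 0, y => simp [Uplus]
  | x+1, y+1 => rw [Uplus_succ b hb, Uplus_succ b hb]; exact hg (by omega)

end Aux

noncomputable def Vst (a : ℤ → ℕ → Bool) (x : ℤ) : ℕ := {t | walk a t = x}.ncard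
noncomputable def TA (a : ℤ → ℕ → Bool) (x : ℤ) : ℕ :=
  ((Finset.range (Vst a x)).filter (fun k => a x k = true)).card
noncomputable def FA (a : ℤ → ℕ → Bool) (x : ℤ) : ℕ :=
  ((Finset.range (Vst a x)).filter (fun k => a x k = false)).card

section Mid
variable (a : ℤ → ℕ → Bool) (h : ∀ t, walk a t ≠ -1) (hnd : NonDegEnv a)
include h hnd

lemma Vst_eq (x : ℤ) : Vst a x = (finite_visits a h hnd x).toFinset.card := by
  rw [Vst, Set.ncard_eq_toFinset_card _ (finite_visits a h hnd x)]

lemma R_eq (x : ℤ) :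
    {t | walk a t = x ∧ walk a (t+1) = x + 1}.ncard = TA a x := by
  classical
  have hset : {t | walk a t = x ∧ walk a (t+1) = x + 1}
      = {t | walk a t = x ∧ a x (Nat.count (fun s => walk a s = x) t) = true} := by
    ext t
    simp only [Set.mem_setOf_eq, and_congr_right_iff]
    intro hx
    rw [walk_succ_of_eq a hx]
    rcases Bool.eq_false_or_eq_true (a x (Nat.count (fun s => walk a s = x) t)) with hb | hb <;>
      rw [hb] <;> simp <;> omega
  have hs := site_count (fun t => walk a t = x) (fun k => a x k = true)
    (finite_visits a h hnd x)
  rw [hset, hs, TA, Vst_eq a h hnd]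
  congr

lemma L_eq (x : ℤ) :
    {t | walk a t = x + 1 ∧ walk a (t+1) = x}.ncard = FA a (x+1) := by
  classical
  have hset : {t | walk a t = x + 1 ∧ walk a (t+1) = x}
      = {t | walk a t = x + 1 ∧ a (x+1) (Nat.count (fun s => walk a s = x + 1) t) = false} := by
    ext t
    simp only [Set.mem_setOf_eq, and_congr_right_iff]
    intro hx
    rw [walk_succ_of_eq a hx]
    rcases Bool.eq_false_or_eq_true (a (x+1) (Nat.count (fun s => walk a s = x+1) t)) with hb | hb <;>
      rw [hb] <;> simp <;> omega
  have hs := site_count (fun t => walk a t = x + 1) (fun k => a (x+1) k = false)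
    (finite_visits a h hnd (x+1))
  rw [hset, hs, FA, Vst_eq a h hnd]
  congr

lemma FA_zero : FA a 0 = 0 := by
  classical
  rw [FA, Finset.card_eq_zero, Finset.filter_eq_empty_iff]
  intro k hk
  simp only [Finset.mem_range] at hk
  rw [Vst_eq a h hnd] at hk
  set p : ℕ → Prop := fun t => walk a t = (0:ℤ)
  intro hfalse
  have h1 : p (Nat.nth p k) := Nat.nth_mem_of_lt_card (finite_visits a h hnd 0) hk
  have h2 : Nat.count p (Nat.nth p k) = k :=
    Nat.count_nth_of_lt_card_finite (finite_visits a h hnd 0) hk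
  have := walk_succ_of_eq a h1
  rw [h2, hfalse] at this
  simp at this
  exact h _ this

lemma TA_le_Uplus (x : ℤ) : TA a x ≤ Uplus (a x) (FA a x + 1) := by
  classical
  set q : ℕ → Prop := fun i => a x i = false with hqdef
  have hqi : (setOf q).Infinite := (hnd x).1
  have hcnt : ∀ j, ((Finset.range j).filter (fun i => a x i = false)).card = Nat.count q j := by
    intro j; rw [Nat.count_eq_card_filter_range]
  set V := Vst a x
  set F := FA a x with hF
  have hFc : Nat.count q V = F := by rw [← hcnt]; rfl
  have hmem : Nat.count q (Nat.nth q F + 1) = F + 1 := by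
    rw [Nat.count_succ, Nat.count_nth_of_infinite hqi, if_pos (Nat.nth_mem_of_infinite hqi F)]
  set S := {j : ℕ | ((Finset.range j).filter (fun i => a x i = false)).card = F + 1} with hS
  have hSne : S.Nonempty := ⟨Nat.nth q F + 1, by simp only [hS, Set.mem_setOf_eq, hcnt]; exact hmem⟩
  have hj0 : sInf S ∈ S := Nat.sInf_mem hSne
  set j0 := sInf S
  have hj0c : Nat.count q j0 = F + 1 := by rw [← hcnt]; exact hj0
  have hVj0 : V < j0 := Nat.lt_of_count_lt_count (p := q) (by omega)
  have hU : Uplus (a x) (F + 1) = j0 - (F + 1) := by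
    rw [Uplus, if_neg (by omega : F + 1 ≠ 0)]
  have hTA : TA a x ≤ ((Finset.range j0).filter (fun k => a x k = true)).card := by
    apply Finset.card_le_card
    apply Finset.filter_subset_filter
    exact Finset.range_subset_range.2 (by omega)
  have hsplit : ((Finset.range j0).filter (fun k => a x k = true)).card
      + ((Finset.range j0).filter (fun k => a x k = false)).card = j0 := by
    have := Finset.card_filter_add_card_filter_not
      (s := Finset.range j0) (p := fun k => a x k = true)
    rw [Finset.card_range] at this
    have heq : ((Finset.range j0).filter (fun k => ¬ a x k = true)).card
        = ((Finset.range j0).filter (fun i => a x i = false)).card := by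
      congr 1
      apply Finset.filter_congr
      intro k _
      simp [Bool.not_eq_true]
    omega
  have hj0F : ((Finset.range j0).filter (fun i => a x i = false)).card = F + 1 := hj0
  have hcount : Nat.count q j0 ≤ j0 := Nat.count_le _
  rw [hU]
  omega

lemma TA_add_FA (x : ℤ) : TA a x + FA a x = Vst a x := by
  classical
  have := Finset.card_filter_add_card_filter_not
    (s := Finset.range (Vst a x)) (p := fun k => a x k = true)
  rw [Finset.card_range] at this
  have heq : ((Finset.range (Vst a x)).filter (fun k => ¬ a x k = true)).card
      = ((Finset.range (Vst a x)).filter (fun i => a x i = false)).card := by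
    congr 1
    apply Finset.filter_congr
    intro k _
    simp [Bool.not_eq_true]
  rw [TA, FA]
  omega

end Mid

section WalkAux2

variable (a : ℤ → ℕ → Bool) (h : ∀ t, walk a t ≠ -1) (hnd : NonDegEnv a)
include h hnd

lemma crossings (m : ℕ) :
    {t | walk a t = (m:ℤ) ∧ walk a (t+1) = (m:ℤ) + 1}.ncard
      = {t | walk a t = (m:ℤ) + 1 ∧ walk a (t+1) = (m:ℤ)}.ncard + 1 := by
  classical
  -- the set of times at which the walk is ≤ m is finite
  have hB : {t | walk a t ≤ (m:ℤ)}.Finite := by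
    have hsub : {t | walk a t ≤ (m:ℤ)} ⊆
        ⋃ i ∈ Finset.range (m+1), {t | walk a t = (i:ℤ)} := by
      intro t ht
      simp only [Set.mem_setOf_eq] at ht
      have h0 := walk_nonneg a h t
      simp only [Set.mem_iUnion, Finset.mem_range, Set.mem_setOf_eq]
      exact ⟨(walk a t).toNat, by omega, by omega⟩
    exact Set.Finite.subset (Set.Finite.biUnion (Finset.range (m+1)).finite_toSet
      (fun i _ => finite_visits a h hnd i)) hsub
  obtain ⟨n, hn⟩ := hB.bddAbove
  set T0 := n + 1 with hT0def
  have hT0 : ∀ t, T0 ≤ t → (m:ℤ) < walk a t := by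
    intro t ht
    by_contra hc
    push_neg at hc
    have := hn (Set.mem_setOf_eq ▸ hc : t ∈ {t | walk a t ≤ (m:ℤ)})
    omega
  set rc : ℕ → Prop := fun t => walk a t = (m:ℤ) ∧ walk a (t+1) = (m:ℤ) + 1 with hrc
  set lc : ℕ → Prop := fun t => walk a t = (m:ℤ) + 1 ∧ walk a (t+1) = (m:ℤ) with hlc
  set f : ℕ → ℤ := fun t => if (m:ℤ) < walk a t then 1 else 0 with hf
  have key : ∀ t, f (t+1) - f t
      = (if rc t then (1:ℤ) else 0) - (if lc t then 1 else 0) := by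
    intro t
    simp only [hf, hrc, hlc]
    rcases walk_step a t with h1 | h1 <;> split_ifs <;> omega
  have hsum : ∑ t ∈ Finset.range T0,
      ((if rc t then (1:ℤ) else 0) - (if lc t then 1 else 0)) = f T0 - f 0 := by
    rw [← Finset.sum_range_sub f T0]
    exact Finset.sum_congr rfl (fun t _ => (key t).symm)
  have hfT0 : f T0 = 1 := if_pos (hT0 T0 le_rfl)
  have hf0 : f 0 = 0 := by
    have : walk a 0 = 0 := rfl
    simp only [hf, this]
    rw [if_neg (by omega)]
  rw [Finset.sum_sub_distrib, Finset.sum_boole, Finset.sum_boole, hfT0, hf0] at hsum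
  have hRset : {t | walk a t = (m:ℤ) ∧ walk a (t+1) = (m:ℤ) + 1}
      = ↑((Finset.range T0).filter rc) := by
    ext t
    simp only [Set.mem_setOf_eq, Finset.coe_filter, Finset.mem_range, hrc]
    constructor
    · intro ht
      refine ⟨?_, ht⟩
      by_contra hc
      have := hT0 t (by omega)
      omega
    · exact fun ht => ht.2
  have hLset : {t | walk a t = (m:ℤ) + 1 ∧ walk a (t+1) = (m:ℤ)}
      = ↑((Finset.range T0).filter lc) := by
    ext t
    simp only [Set.mem_setOf_eq, Finset.coe_filter, Finset.mem_range, hlc]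
    constructor
    · intro ht
      refine ⟨?_, ht⟩
      by_contra hc
      have := hT0 (t+1) (by omega)
      omega
    · exact fun ht => ht.2
  rw [hRset, hLset, Set.ncard_coe_finset, Set.ncard_coe_finset]
  have h1 : (((Finset.range T0).filter rc).card : ℤ)
      - (((Finset.range T0).filter lc).card : ℤ) = 1 := by exact_mod_cast hsum
  omega

end WalkAux2

/-- if `T₋₁ = ∞` then `Z⁺_n ≥ W_n` for all `n ≥ 0`, where `W_n` is the
number of right crossings of the edge `{n-1,n}` (and `W₀ = 1`). -/
theorem stmt_5 (a : ℤ → ℕ → Bool) (hnd : NonDegEnv a) (h : ∀ t, walk a t ≠ -1) :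
    ∀ n : ℕ,
      (if n = 0 then 1
        else Set.ncard {t : ℕ | walk a t = (n : ℤ) - 1 ∧ walk a (t + 1) = (n : ℤ)})
      ≤ Zplus a n 1 := by
  intro n
  induction n with
  | zero => simp [Zplus]
  | succ m ih =>
    rw [if_neg (Nat.succ_ne_zero m)]
    have hcast2 : ((m+1 : ℕ) : ℤ) = (m:ℤ) + 1 := by push_cast; ring
    have hsetW : {t : ℕ | walk a t = ((m+1:ℕ):ℤ) - 1 ∧ walk a (t+1) = ((m+1:ℕ):ℤ)}
        = {t | walk a t = (m:ℤ) ∧ walk a (t+1) = (m:ℤ)+1} := by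
      rw [hcast2, show ((m:ℤ)+1) - 1 = (m:ℤ) by ring]
    rw [hsetW, R_eq a h hnd m]
    have hZ : Zplus a (m+1) 1 = Uplus (a m) (Zplus a m 1) := rfl
    rw [hZ]
    refine le_trans (TA_le_Uplus a h hnd m) (Uplus_mono (a m) (hnd m).1 ?_)
    cases m with
    | zero =>
        rw [Nat.cast_zero, FA_zero a h hnd]
        norm_num [Zplus]
    | succ k =>
        have hL : FA a ((k:ℤ)+1) = {t | walk a t = (k:ℤ) + 1 ∧ walk a (t+1) = (k:ℤ)}.ncard :=
          (L_eq a h hnd k).symm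
        have hcr := crossings a h hnd k
        have hcast3 : ((k+1:ℕ):ℤ) = (k:ℤ)+1 := by push_cast; ring
        have hihset : {t : ℕ | walk a t = ((k+1:ℕ):ℤ) - 1 ∧ walk a (t+1) = ((k+1:ℕ):ℤ)}
            = {t | walk a t = (k:ℤ) ∧ walk a (t+1) = (k:ℤ)+1} := by
          rw [hcast3, show ((k:ℤ)+1) - 1 = (k:ℤ) by ring]
        rw [if_neg (Nat.succ_ne_zero k), hihset] at ih
        rw [hcast3, hL]
        omega
end
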